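/- Every tree with t nodes and maximum degree at most 3 has a matching with at least ⌈(t-1)/3⌉ edges. -/

import Mathlib

/-- `M` is a matching in `G`: a set of edges of `G` that are pairwise
vertex-disjoint. -/
def IsMatchingSet {V : Type*} (G : SimpleGraph V) (M : Finset (Sym2 V)) : Prop :=
  ↑M ⊆ G.edgeSet ∧ ∀ e ∈ M, ∀ f ∈ M, e ≠ f → ∀ v : V, ¬(v ∈ e ∧ v ∈ f)

open SimpleGraph Finset

lemma exists_parent {V : Type*} (G : SimpleGraph V) (hc : G.Connected)
    (r : V) {u : V} (h : u ≠ r) :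
    ∃ w, G.Adj u w ∧ G.dist r w + 1 = G.dist r u := by
  obtain ⟨p, hp, hlen⟩ := hc.exists_path_of_dist u r
  cases p with
  | nil => exact absurd rfl h
  | @cons _ w _ hadj q =>
    refine ⟨w, hadj, ?_⟩
    have h1 : G.dist r w ≤ q.length := by
      rw [G.dist_comm]; exact G.dist_le q
    have h2 : q.length + 1 = G.dist u r := by simpa using hlen
    have h3 : G.dist r u ≤ G.dist r w + 1 := by
      have := hc.dist_triangle (u := r) (v := w) (w := u)
      have hwu : G.dist w u = 1 := by
        rw [SimpleGraph.dist_eq_one_iff_adj]; exact hadj.symm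
      omega
    have h4 : G.dist r u = G.dist u r := G.dist_comm ..
    omega

lemma induce_acyclic {V : Type*} {G : SimpleGraph V} (h : G.IsAcyclic) (sc : Set V) :
    (G.induce sc).IsAcyclic := by
  intro v c hc
  exact h (c.map (SimpleGraph.Embedding.induce sc).toHom)
    (hc.map Subtype.val_injective)

universe u

lemma tree_matching_aux (n : ℕ) : ∀ (V : Type u) [Fintype V] [DecidableEq V]
    (G : SimpleGraph V) [DecidableRel G.Adj], Fintype.card V ≤ n → G.IsTree →
    (∀ v, G.degree v ≤ 3) →
    ∃ M : Finset (Sym2 V), IsMatchingSet G M ∧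
      (Fintype.card V - 1 + 2) / 3 ≤ M.card := by
  induction n using Nat.strong_induction_on with
  | _ n ih =>
  intro V _ _ G _ hcard hT hdeg
  by_cases ht1 : Fintype.card V ≤ 1
  · refine ⟨∅, ⟨by simp, by simp⟩, ?_⟩
    simp [Nat.div_eq_of_lt (show Fintype.card V - 1 + 2 < 3 by omega)]
  push_neg at ht1
  have hconn := hT.isConnected
  haveI : Nonempty V := Fintype.card_pos_iff.mp (by omega)
  obtain ⟨r⟩ := ‹Nonempty V›
  obtain ⟨x, -, hx⟩ := Finset.exists_max_image (Finset.univ : Finset V) (G.dist r)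
    ⟨r, Finset.mem_univ r⟩
  have hmax : ∀ v : V, G.dist r v ≤ G.dist r x := fun v => hx v (Finset.mem_univ v)
  obtain ⟨v₀, hv₀⟩ := Fintype.exists_ne_of_one_lt_card ht1 r
  have hd1 : 1 ≤ G.dist r x :=
    le_trans (hconn.pos_dist_of_ne (Ne.symm hv₀)) (hmax v₀)
  have hxr : x ≠ r := by
    intro h; rw [h, SimpleGraph.dist_self] at hd1; omega
  obtain ⟨y, hxy, hy⟩ := exists_parent G hconn r hxr
  set d := G.dist r x with hd
  by_cases hd2 : d ≤ 1
  -- small case: the whole graph is within distance 1 of r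
  · have hcard4 : Fintype.card V ≤ 4 := by
      have hsub : (Finset.univ : Finset V) ⊆ insert r (G.neighborFinset r) := by
        intro v _
        by_cases hvr : v = r
        · simp [hvr]
        · have : G.dist r v = 1 := le_antisymm (le_trans (hmax v) hd2)
            (hconn.pos_dist_of_ne (Ne.symm hvr))
        
          rw [SimpleGraph.dist_eq_one_iff_adj] at this
          simp [Finset.mem_insert, SimpleGraph.mem_neighborFinset, this]
      calc Fintype.card V ≤ (insert r (G.neighborFinset r)).card :=
            Finset.card_le_card hsub
        _ ≤ 1 + G.degree r := by
            have := Finset.card_insert_le r (G.neighborFinset r)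
            simp only [SimpleGraph.card_neighborFinset_eq_degree] at this
            omega
        _ ≤ 4 := by have := hdeg r; omega
    refine ⟨{s(x, y)}, ⟨?_, ?_⟩, ?_⟩
    · intro e he
      simp only [Finset.coe_singleton, Set.mem_singleton_iff] at he
      subst he; exact hxy
    · intro e he f hf hef
      simp only [Finset.mem_singleton] at he hf
      exact absurd (he.trans hf.symm) hef
    · have : (Fintype.card V - 1 + 2) / 3 ≤ 5 / 3 :=
        Nat.div_le_div_right (by omega)
      simpa using this.trans (by norm_num)
  -- main case: d ≥ 2
  push_neg at hd2
  have hyd : G.dist r y + 1 = d := hy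
  have hyr : y ≠ r := by
    intro h; rw [h, SimpleGraph.dist_self] at hyd; omega
  obtain ⟨z, hyz, hz⟩ := exists_parent G hconn r hyr
  set S : Finset V := insert y ((G.neighborFinset y).filter (fun w => G.dist r w = d))
    with hSdef
  have hxS : x ∈ S := by
    apply Finset.mem_insert_of_mem
    exact Finset.mem_filter.mpr ⟨(G.mem_neighborFinset y x).mpr hxy.symm, rfl⟩
  have hyS : y ∈ S := Finset.mem_insert_self y _
  have hxyne : x ≠ y := hxy.ne
  have hSle : S.card ≤ 3 := by
    have hsub : (G.neighborFinset y).filter (fun w => G.dist r w = d) ⊆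
        (G.neighborFinset y).erase z := by
      intro w hw
      rw [Finset.mem_filter] at hw
      refine Finset.mem_erase.mpr ⟨?_, hw.1⟩
      intro h; rw [h] at hw; omega
    have h1 : ((G.neighborFinset y).filter (fun w => G.dist r w = d)).card ≤
        ((G.neighborFinset y).erase z).card := Finset.card_le_card hsub
    have h2 : ((G.neighborFinset y).erase z).card = G.degree y - 1 := by
      rw [Finset.card_erase_of_mem ((G.mem_neighborFinset y z).mpr hyz),
        SimpleGraph.card_neighborFinset_eq_degree]
    have h3 := hdeg y
    have h4 : S.card ≤ ((G.neighborFinset y).filter (fun w => G.dist r w = d)).card + 1 := by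
      rw [hSdef]; exact Finset.card_insert_le _ _
    omega
  have hS2 : 2 ≤ S.card := by
    have : ({x, y} : Finset V) ⊆ S := by
      intro v hv; rcases Finset.mem_insert.mp hv with rfl | hv
      · exact hxS
      · rw [Finset.mem_singleton] at hv; subst hv; exact hyS
    have := Finset.card_le_card this
    rwa [Finset.card_pair hxyne] at this
  have hrS : r ∉ S := by
    intro h
    rcases Finset.mem_insert.mp h with h | h
    · exact hyr h.symm
    · rw [Finset.mem_filter] at h
      rw [SimpleGraph.dist_self] at h
      omega
  set sc : Set V := {v | v ∉ S} with hscdef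
  haveI : DecidablePred (· ∈ sc) := fun v => show Decidable (v ∉ S) from inferInstance
  haveI : DecidableRel (G.induce sc).Adj := fun a b => ‹DecidableRel G.Adj› a.val b.val
  have hrsc : r ∈ sc := hrS
  haveI : Nonempty ↥sc := ⟨⟨r, hrsc⟩⟩
  have key : ∀ (m : ℕ) (u : V) (hu : u ∈ sc), G.dist r u ≤ m →
      (G.induce sc).Reachable ⟨u, hu⟩ ⟨r, hrsc⟩ := by
    intro m
    induction m with
    | zero =>
      intro u hu h0
      have : r = u := hconn.dist_eq_zero_iff.mp (Nat.le_zero.mp h0)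
      subst this
      exact Reachable.refl _
    | succ m ihm =>
      intro u hu hum
      by_cases hur : u = r
      · have : (⟨u, hu⟩ : ↥sc) = ⟨r, hrsc⟩ := Subtype.ext hur
        rw [this]
      · obtain ⟨w, huw, hw⟩ := exists_parent G hconn r hur
        have hwS : w ∈ sc := by
          show w ∉ S
          intro hwmem
          rcases Finset.mem_insert.mp hwmem with rfl | hmem
          · -- w = y : then u is a neighbor of y at distance d, so u ∈ S
            have hud : G.dist r u = d := by omega
            have : u ∈ S := by
              apply Finset.mem_insert_of_mem
              exact Finset.mem_filter.mpr ⟨(G.mem_neighborFinset w u).mpr huw.symm, hud⟩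
            exact hu this
          · rw [Finset.mem_filter] at hmem
            have := hmax u
            omega
        have hadj' : (G.induce sc).Adj ⟨u, hu⟩ ⟨w, hwS⟩ := huw
        exact hadj'.reachable.trans (ihm w hwS (by omega))
  have hpre : (G.induce sc).Preconnected := fun a b =>
    (key (G.dist r a.1) a.1 a.2 le_rfl).trans (key (G.dist r b.1) b.1 b.2 le_rfl).symm
  have hT' : (G.induce sc).IsTree := ⟨⟨hpre⟩, induce_acyclic hT.IsAcyclic sc⟩
  have hdeg' : ∀ v : ↥sc, (G.induce sc).degree v ≤ 3 := by
    intro v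
    refine le_trans ?_ (hdeg v.val)
    apply Finset.card_le_card_of_injOn (fun a => a.val)
    · intro a ha
      simp only [Finset.mem_coe, SimpleGraph.mem_neighborFinset] at ha ⊢
      exact ha
    · intro a _ b _ hab
      exact Subtype.val_injective hab
  have hcards : Fintype.card ↥sc + S.card = Fintype.card V := by
    have h1 : Fintype.card ↥sc = (Finset.univ.filter (fun v => v ∈ sc)).card :=
      Fintype.card_subtype _
    have h2 : Finset.univ.filter (fun v => v ∈ sc) = Sᶜ := by
      ext v; simp [Finset.mem_compl, hscdef]
    have h3 : (Sᶜ : Finset V).card = Fintype.card V - S.card := Finset.card_compl S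
    have h4 : S.card ≤ Fintype.card V := Finset.card_le_univ S
    rw [h1, h2, h3]
    omega
  obtain ⟨M', hM'1, hM'2⟩ := ih (Fintype.card ↥sc) (by omega) ↥sc (G.induce sc)
    le_rfl hT' hdeg'
  set M'' := M'.image (Sym2.map (Subtype.val : ↥sc → V)) with hM''def
  have hinj : Function.Injective (Sym2.map (Subtype.val : ↥sc → V)) :=
    Sym2.map.injective Subtype.val_injective
  have hM''card : M''.card = M'.card := Finset.card_image_of_injective _ hinj
  have hvert : ∀ e ∈ M'', ∀ v : V, v ∈ e → v ∉ S := by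
    intro e he v hv
    obtain ⟨e', he', rfl⟩ := Finset.mem_image.mp he
    rw [Sym2.mem_map] at hv
    obtain ⟨a, ha, rfl⟩ := hv
    exact a.2
  have hxyM : s(x, y) ∉ M'' := fun h => (hvert _ h x (by simp)) hxS
  have hscpos : 1 ≤ Fintype.card ↥sc := Fintype.card_pos
  refine ⟨insert s(x, y) M'', ⟨?_, ?_⟩, ?_⟩
  · intro e he
    simp only [Finset.coe_insert, Set.mem_insert_iff, Finset.mem_coe] at he
    rcases he with rfl | he
    · exact hxy
    · obtain ⟨e', he', rfl⟩ := Finset.mem_image.mp he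
      have hedge : e' ∈ (G.induce sc).edgeSet := hM'1.1 he'
      revert hedge
      refine Sym2.ind (fun a b => ?_) e'
      intro h
      rw [SimpleGraph.mem_edgeSet] at h
      simpa [Sym2.map_pair_eq, SimpleGraph.mem_edgeSet] using h
  · intro e he f hf hef v hv
    obtain ⟨hv1, hv2⟩ := hv
    rw [Finset.mem_insert] at he hf
    rcases he with rfl | he <;> rcases hf with rfl | hf
    · exact hef rfl
    · have hvS : v ∉ S := hvert f hf v hv2
      rcases Sym2.mem_iff.mp hv1 with rfl | rfl
      · exact hvS hxS
      · exact hvS hyS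
    · have hvS : v ∉ S := hvert e he v hv1
      rcases Sym2.mem_iff.mp hv2 with rfl | rfl
      · exact hvS hxS
      · exact hvS hyS
    · obtain ⟨e', he', rfl⟩ := Finset.mem_image.mp he
      obtain ⟨f', hf', rfl⟩ := Finset.mem_image.mp hf
      have hne : e' ≠ f' := fun h => hef (by rw [h])
      rw [Sym2.mem_map] at hv1 hv2
      obtain ⟨a, ha, rfl⟩ := hv1
      obtain ⟨b, hb, hba⟩ := hv2
      have : b = a := Subtype.val_injective hba
      subst this
      exact hM'1.2 e' he' f' hf' hne b ⟨ha, hb⟩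
  · rw [Finset.card_insert_of_notMem hxyM, hM''card]
    have h1 : Fintype.card V - 1 + 2 ≤ (Fintype.card ↥sc - 1 + 2) + 3 := by omega
    calc (Fintype.card V - 1 + 2) / 3 ≤ ((Fintype.card ↥sc - 1 + 2) + 3) / 3 :=
          Nat.div_le_div_right h1
      _ = (Fintype.card ↥sc - 1 + 2) / 3 + 1 := Nat.add_div_right _ (by norm_num)
      _ ≤ M'.card + 1 := by omega

/-- Every tree with `t` nodes and maximum degree at most 3 has a matching with
at least `⌈(t-1)/3⌉` edges. -/
theorem tree_matching_ge {V : Type*} [Fintype V] [DecidableEq V]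
    (G : SimpleGraph V) [DecidableRel G.Adj]
    (hT : G.IsTree) (hΔ : G.maxDegree ≤ 3) :
    ∃ M : Finset (Sym2 V), IsMatchingSet G M ∧
      (Fintype.card V - 1 + 2) / 3 ≤ M.card := by
  exact tree_matching_aux (Fintype.card V) V G le_rfl hT
    (fun v => (G.degree_le_maxDegree v).trans hΔ)
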